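/- Let G be a finite undirected graph with disjoint vertex sets S and T and drainage Z_1,...,Z_k, with fixed Menger's paths and associated mixed graph G_D. Then every dam B_i ⊆ Z_i has a unique closest dam: either B_i is itself a closest dam, or there is exactly one closest dam B_h (h < i) that is closer than B_i. -/

import Mathlib

open SimpleGraph

variable {V : Type*}

/-- `X` is an edge `(S,T)`-cut: after deleting the edges of `X`,
no vertex of `S` can reach a vertex of `T`. -/
def EdgeCut (G : SimpleGraph V) (S T : Set V) (X : Finset (Sym2 V)) : Prop :=
  ∀ s ∈ S, ∀ t ∈ T, ¬ (G.deleteEdges ↑X).Reachable s t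

/-- `X` is a minimum edge `(S,T)`-cut. -/
def MinEdgeCut (G : SimpleGraph V) (S T : Set V) (X : Finset (Sym2 V)) : Prop :=
  EdgeCut G S T X ∧ ∀ Y : Finset (Sym2 V), EdgeCut G S T Y → X.card ≤ Y.card

/-- `R(X,S)`: vertices reachable from `S` in `G` deprived of the edges of `X`. -/
def Rside (G : SimpleGraph V) (X : Finset (Sym2 V)) (S : Set V) : Set V :=
  {v | ∃ s ∈ S, (G.deleteEdges ↑X).Reachable s v}

/-- A minimum closest `(S,T)`-cut: a minimum cut `Z` such that no other cut `X'`
satisfies `|X'| ≤ |Z|` and `R(X',S) ⊆ R(Z,S)`. -/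
def MinClosestCut (G : SimpleGraph V) (S T : Set V) (Z : Finset (Sym2 V)) : Prop :=
  MinEdgeCut G S T Z ∧
    ∀ X' : Finset (Sym2 V), EdgeCut G S T X' → X' ≠ Z →
      ¬ (X'.card ≤ Z.card ∧ Rside G X' S ⊆ Rside G Z S)

/-- `G` deprived of the vertex set `U` (kept on the same vertex type). -/
def deprive (G : SimpleGraph V) (U : Set V) : SimpleGraph V where
  Adj u v := G.Adj u v ∧ u ∉ U ∧ v ∉ U
  symm := ⟨fun _ _ ⟨h, hu, hv⟩ => ⟨h.symm, hv, hu⟩⟩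
  loopless := ⟨fun _ ⟨h, _, _⟩ => G.ne_of_adj h rfl⟩

/-- `V^T(Z)` relative to sources `S`: the endpoints of edges of `Z` that are not
reachable from `S` once `Z` is removed. -/
def nextSources (G : SimpleGraph V) (Z : Finset (Sym2 V)) (S : Set V) : Set V :=
  {v | v ∉ Rside G Z S ∧ ∃ u, s(u, v) ∈ Z}

/-- The drainage `Z 1, ..., Z k` of the instance `(G,S,T)` with minimum cut size `p`:
`Z 1` is the minimum closest `(S,T)`-cut, and `Z (i+1)` is the minimum closest
`(S_{i+1},T)`-cut of size `p` in `G` deprived of `R(Z i, S)`; the construction stops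
at `k`, when no further cut of size `p` exists. -/
def IsDrainage (G : SimpleGraph V) (S T : Set V) (p k : ℕ)
    (Z : ℕ → Finset (Sym2 V)) : Prop :=
  1 ≤ k ∧
  MinClosestCut G S T (Z 1) ∧ (Z 1).card = p ∧
  (∀ i, 1 ≤ i → i < k →
    MinClosestCut (deprive G (Rside G (Z i) S)) (nextSources G (Z i) S) T (Z (i + 1)) ∧
      (Z (i + 1)).card = p) ∧
  (∀ X : Finset (Sym2 V),
    EdgeCut (deprive G (Rside G (Z k) S)) (nextSources G (Z k) S) T X → p < X.card)

/-- A family of `p` pairwise edge-disjoint `(S,T)`-paths (Menger's paths). -/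
structure MengerFamily (G : SimpleGraph V) (S T : Set V) (p : ℕ) where
  a : Fin p → V
  b : Fin p → V
  ha : ∀ j, a j ∈ S
  hb : ∀ j, b j ∈ T
  walk : ∀ j, G.Walk (a j) (b j)
  isPath : ∀ j, (walk j).IsPath
  edgeDisj : ∀ i j, i ≠ j → ∀ e, e ∈ (walk i).edges → e ∉ (walk j).edges

namespace MengerFamily

variable {G : SimpleGraph V} {S T : Set V} {p : ℕ}

/-- Arc of the mixed graph `G_D`: `(u,v)` is traversed in this direction by some
Menger path (oriented from `S` to `T`). -/
def Arc (M : MengerFamily G S T p) (u v : V) : Prop :=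
  ∃ j, ∃ d ∈ (M.walk j).darts, d.toProd = (u, v)

/-- Edges lying on some Menger path. -/
def pathEdge (M : MengerFamily G S T p) (e : Sym2 V) : Prop :=
  ∃ j, e ∈ (M.walk j).edges

/-- One step of reachability in the mixed graph `G_D` deprived of the dam `B`:
follow an arc in its direction, or an undirected edge in either direction. -/
def step (M : MengerFamily G S T p) (B : Finset (Sym2 V)) (u v : V) : Prop :=
  (M.Arc u v ∨ (G.Adj u v ∧ ¬ M.pathEdge s(u, v))) ∧ s(u, v) ∉ B

/-- Dry area `A*(B)`: the vertices not reachable from `S` in `G_D \ B`. -/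
def dryArea (M : MengerFamily G S T p) (B : Finset (Sym2 V)) : Set V :=
  {v | ¬ ∃ s ∈ S, Relation.ReflTransGen (M.step B) s v}

/-- Signature `σ(B)`: the set of Menger paths meeting `B`. -/
def sig (M : MengerFamily G S T p) (B : Finset (Sym2 V)) : Set (Fin p) :=
  {j | ∃ e ∈ B, e ∈ (M.walk j).edges}

/-- `S*(B)`: the tails of the arcs of `B`. -/
def Sstar (M : MengerFamily G S T p) (B : Finset (Sym2 V)) : Set V :=
  {u | ∃ v, M.Arc u v ∧ s(u, v) ∈ B}

/-- `T*(B)`: heads, outside the dry area, of edges leaving `S*(B) ∪ A*(B)`. -/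
def Tstar (M : MengerFamily G S T p) (B : Finset (Sym2 V)) : Set V :=
  {v | v ∉ M.dryArea B ∧ ∃ u ∈ M.Sstar B ∪ M.dryArea B, G.Adj u v}

/-- `V*(B) = S*(B) ∪ A*(B) ∪ T*(B)`. -/
def Vstar (M : MengerFamily G S T p) (B : Finset (Sym2 V)) : Set V :=
  M.Sstar B ∪ M.dryArea B ∪ M.Tstar B

/-- `E*(B)`: edges with both endpoints in `V*(B)`, at least one of them in `A*(B)`. -/
def Estar (M : MengerFamily G S T p) (B : Finset (Sym2 V)) : Set (Sym2 V) :=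
  {e | ∃ u v, e = s(u, v) ∧ G.Adj u v ∧ u ∈ M.dryArea B ∧ v ∈ M.Vstar B}

/-- The graph `G*(B)` of the dry instance `D(I,B)`. -/
def Gstar (M : MengerFamily G S T p) (B : Finset (Sym2 V)) : SimpleGraph V where
  Adj u v := G.Adj u v ∧ s(u, v) ∈ M.Estar B
  symm := ⟨fun _ _ ⟨h, he⟩ => ⟨h.symm, by rwa [Sym2.eq_swap]⟩⟩
  loopless := ⟨fun _ ⟨h, _⟩ => G.ne_of_adj h rfl⟩

end MengerFamily

/-- A dam of the drainage `Z` (of length `k`): a nonempty subset of some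
minimum drainage cut `Z i`. -/
def IsDam (Z : ℕ → Finset (Sym2 V)) (k i : ℕ) (B : Finset (Sym2 V)) : Prop :=
  1 ≤ i ∧ i ≤ k ∧ B ⊆ Z i ∧ B.Nonempty

/-- `B_h` (of level `h`) is closer than the dam `B_i` (of level `i`). -/
def Closer {G : SimpleGraph V} {S T : Set V} {p : ℕ} (M : MengerFamily G S T p)
    (Z : ℕ → Finset (Sym2 V)) (h i : ℕ) (Bh Bi : Finset (Sym2 V)) : Prop :=
  h < i ∧ M.sig Bh = M.sig Bi ∧ M.Estar Bh ∩ ↑(Z i) = ↑Bi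

/-- A closest dam: a dam such that no dam is closer than it. -/
def ClosestDam {G : SimpleGraph V} {S T : Set V} {p : ℕ} (M : MengerFamily G S T p)
    (Z : ℕ → Finset (Sym2 V)) (k i : ℕ) (B : Finset (Sym2 V)) : Prop :=
  IsDam Z k i B ∧ ¬ ∃ h Bh, IsDam Z k h Bh ∧ Closer M Z h i Bh B


namespace CDAux

open SimpleGraph

variable {V : Type*}

/-! ### Generic walk lemmas -/

lemma walk_split_dart {G : SimpleGraph V} {a b : V} (W : G.Walk a b) {d : G.Dart}
    (hd : d ∈ W.darts) :
    ∃ (W1 : G.Walk a d.fst) (W2 : G.Walk d.snd b),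
      W.darts = W1.darts ++ d :: W2.darts := by
  induction W with
  | nil => simp at hd
  | @cons u v w h W ih =>
    rw [SimpleGraph.Walk.darts_cons] at hd
    rcases List.mem_cons.mp hd with hd | hd
    · subst hd
      exact ⟨SimpleGraph.Walk.nil, W, by simp⟩
    · obtain ⟨W1, W2, hW⟩ := ih hd
      exact ⟨SimpleGraph.Walk.cons h W1, W2, by simp [hW]⟩

lemma walk_edges_eq_darts_map {G : SimpleGraph V} {a b : V} (W : G.Walk a b) :
    W.edges = W.darts.map SimpleGraph.Dart.edge := rfl

lemma dart_eq_of_edge_eq {G : SimpleGraph V} {a b : V} {W : G.Walk a b}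
    (hW : W.edges.Nodup) {d d' : G.Dart} (h : d ∈ W.darts) (h' : d' ∈ W.darts)
    (he : d.edge = d'.edge) : d = d' :=
  List.inj_on_of_nodup_map (f := SimpleGraph.Dart.edge) (l := W.darts) hW h h' he

lemma exists_dart_of_edge {G : SimpleGraph V} {a b : V} {W : G.Walk a b} {e : Sym2 V}
    (he : e ∈ W.edges) : ∃ d ∈ W.darts, d.edge = e := by
  rw [walk_edges_eq_darts_map, List.mem_map] at he
  obtain ⟨d, hd, hde⟩ := he
  exact ⟨d, hd, hde⟩

lemma dart_edge_eq {G : SimpleGraph V} (d : G.Dart) : d.edge = s(d.fst, d.snd) := rfl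

/-! ### Rside basics -/

lemma mem_Rside_self {G : SimpleGraph V} {X : Finset (Sym2 V)} {S : Set V} {s : V}
    (hs : s ∈ S) : s ∈ Rside G X S :=
  ⟨s, hs, SimpleGraph.Reachable.refl s⟩

lemma mem_Rside_of_walk {G : SimpleGraph V} {X : Finset (Sym2 V)} {S : Set V}
    {s v : V} (hs : s ∈ S) (W : G.Walk s v) (hW : ∀ e ∈ W.edges, e ∉ X) :
    v ∈ Rside G X S :=
  ⟨s, hs, (W.toDeleteEdges _ (fun e he => by simpa using hW e he)).reachable⟩

lemma Rside_adj {G : SimpleGraph V} {X : Finset (Sym2 V)} {S : Set V} {u v : V}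
    (hu : u ∈ Rside G X S) (h : G.Adj u v) (he : s(u, v) ∉ X) : v ∈ Rside G X S := by
  obtain ⟨s, hs, hr⟩ := hu
  exact ⟨s, hs, hr.trans (SimpleGraph.Adj.reachable
    ((SimpleGraph.deleteEdges_adj).mpr ⟨h, by simpa using he⟩))⟩

lemma Rside_reach {G : SimpleGraph V} {X : Finset (Sym2 V)} {S : Set V} {u v : V}
    (hu : u ∈ Rside G X S) (h : (G.deleteEdges (X : Set (Sym2 V))).Reachable u v) :
    v ∈ Rside G X S := by
  obtain ⟨s, hs, hr⟩ := hu
  exact ⟨s, hs, hr.trans h⟩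


/-! ### Drainage structure -/

section Drainage

variable {G : SimpleGraph V} {S T : Set V} {p k : ℕ} {Z : ℕ → Finset (Sym2 V)}

lemma cardZ (hZ : IsDrainage G S T p k Z) {m : ℕ} (h1 : 1 ≤ m) (hk : m ≤ k) :
    (Z m).card = p := by
  obtain ⟨n, rfl⟩ : ∃ n, m = n + 1 := ⟨m - 1, by omega⟩
  rcases Nat.eq_zero_or_pos n with rfl | hn
  · exact hZ.2.2.1
  · exact (hZ.2.2.2.1 n (by omega) (by omega)).2

/-- Surgery: a walk in `G \ X` from a vertex of `R(Z_m)` to `t ∉ R(Z_m)` yields a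
vertex of `nextSources` reaching `t` in the deprived graph minus `X`. -/
lemma surgery {Zm X : Finset (Sym2 V)} :
    ∀ {u t : V} (_ : (G.deleteEdges (X : Set (Sym2 V))).Walk u t),
      t ∉ Rside G Zm S →
      ((u ∈ Rside G Zm S →
        ∃ v ∈ nextSources G Zm S,
          ((deprive G (Rside G Zm S)).deleteEdges (X : Set (Sym2 V))).Reachable v t) ∧
      (u ∉ Rside G Zm S →
        (((deprive G (Rside G Zm S)).deleteEdges (X : Set (Sym2 V))).Reachable u t ∨
          ∃ v ∈ nextSources G Zm S,
            ((deprive G (Rside G Zm S)).deleteEdges (X : Set (Sym2 V))).Reachable v t))) := by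
  intro u t W
  induction W with
  | nil =>
    intro htR
    constructor
    · intro hu; exact absurd hu htR
    · intro _; exact Or.inl (SimpleGraph.Reachable.refl _)
  | @cons u v w h W ih =>
    intro htR
    have hG : G.Adj u v := ((SimpleGraph.deleteEdges_adj).mp h).1
    have hX : s(u, v) ∉ X := by
      have := ((SimpleGraph.deleteEdges_adj).mp h).2
      simpa using this
    have IH := ih htR
    constructor
    · intro hu
      by_cases hv : v ∈ Rside G Zm S
      · exact IH.1 hv
      · have hedge : s(u, v) ∈ Zm := by
          by_contra hne
          exact hv (Rside_adj hu hG hne)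
        have hvNS : v ∈ nextSources G Zm S := ⟨hv, u, hedge⟩
        rcases IH.2 hv with hr | hE
        · exact ⟨v, hvNS, hr⟩
        · exact hE
    · intro hu
      by_cases hv : v ∈ Rside G Zm S
      · exact Or.inr (IH.1 hv)
      · have hD : ((deprive G (Rside G Zm S)).deleteEdges (X : Set (Sym2 V))).Adj u v :=
          (SimpleGraph.deleteEdges_adj).mpr ⟨⟨hG, hu, hv⟩, by simpa using hX⟩
        rcases IH.2 hv with hr | hE
        · exact Or.inl (hD.reachable.trans hr)
        · exact Or.inr hE

lemma edgeCutZ (hZ : IsDrainage G S T p k Z) :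
    ∀ m, 1 ≤ m → m ≤ k → EdgeCut G S T (Z m) := by
  intro m
  induction m with
  | zero => omega
  | succ n ih =>
    intro _ hk
    rcases Nat.eq_zero_or_pos n with rfl | hn
    · exact hZ.2.1.1.1
    · have hcutn : EdgeCut G S T (Z n) := ih (by omega) (by omega)
      have hdep : EdgeCut (deprive G (Rside G (Z n) S)) (nextSources G (Z n) S) T (Z (n + 1)) :=
        (hZ.2.2.2.1 n (by omega) (by omega)).1.1.1
      intro s hs t ht hreach
      obtain ⟨W⟩ := hreach
      have htR : t ∉ Rside G (Z n) S := by
        rintro ⟨s', hs', hr⟩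
        exact hcutn s' hs' t ht hr
      obtain ⟨v, hvNS, hr⟩ := (surgery W htR).1 (mem_Rside_self hs)
      exact hdep v hvNS t ht hr

lemma deleteEdges_erase_eq [DecidableEq (Sym2 V)] {H : SimpleGraph V} {X : Finset (Sym2 V)} {e : Sym2 V}
    (h : ∀ u v : V, s(u, v) = e → ¬ H.Adj u v) :
    H.deleteEdges ((X.erase e : Finset (Sym2 V)) : Set (Sym2 V)) =
      H.deleteEdges (X : Set (Sym2 V)) := by
  ext u v
  simp only [SimpleGraph.deleteEdges_adj, Finset.mem_coe, Finset.mem_erase]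
  constructor
  · rintro ⟨ha, hne⟩
    refine ⟨ha, fun hX => ?_⟩
    by_cases heq : s(u, v) = e
    · exact h u v heq ha
    · exact hne ⟨heq, hX⟩
  · rintro ⟨ha, hX⟩
    exact ⟨ha, fun hm => hX hm.2⟩

/-- Every edge of `Z m` (for `m ≥ 2`) is a real edge of `G` with both
endpoints outside `R(Z (m-1))`. -/
lemma Zedges (hZ : IsDrainage G S T p k Z) {m : ℕ} (h2 : 2 ≤ m) (hk : m ≤ k) :
    ∀ e ∈ Z m, ∃ u v : V, e = s(u, v) ∧ G.Adj u v ∧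
      u ∉ Rside G (Z (m - 1)) S ∧ v ∉ Rside G (Z (m - 1)) S := by
  classical
  intro e he
  obtain ⟨n, rfl⟩ : ∃ n, m = n + 1 := ⟨m - 1, by omega⟩
  have hm1 : n + 1 - 1 = n := rfl
  rw [hm1]
  have hmc : MinEdgeCut (deprive G (Rside G (Z n) S)) (nextSources G (Z n) S) T (Z (n + 1)) :=
    (hZ.2.2.2.1 n (by omega) (by omega)).1.1
  by_contra hcon
  push_neg at hcon
  have hno : ∀ u v : V, s(u, v) = e → ¬ (deprive G (Rside G (Z n) S)).Adj u v := by
    rintro u v heq ⟨hadj, hu, hv⟩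
    exact hv (hcon u v heq.symm hadj hu)
  have hgr := deleteEdges_erase_eq (H := deprive G (Rside G (Z n) S)) (X := Z (n + 1)) hno
  have hcut' : EdgeCut (deprive G (Rside G (Z n) S)) (nextSources G (Z n) S) T
      ((Z (n + 1)).erase e) := by
    intro s hs t ht hr
    exact hmc.1 s hs t ht (by rwa [hgr] at hr)
  have hle := hmc.2 _ hcut'
  have hcard : ((Z (n + 1)).erase e).card = (Z (n + 1)).card - 1 :=
    Finset.card_erase_of_mem he
  have hpos : 1 ≤ (Z (n + 1)).card := Finset.card_pos.mpr ⟨e, he⟩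
  omega

lemma Rside_mono_step (hZ : IsDrainage G S T p k Z) {m : ℕ}
    (h1 : 1 ≤ m) (hk : m + 1 ≤ k) :
    Rside G (Z m) S ⊆ Rside G (Z (m + 1)) S := by
  rintro v ⟨s, hs, ⟨W⟩⟩
  have key : ∀ {u v' : V} (_ : (G.deleteEdges ((Z m : Finset (Sym2 V)) : Set (Sym2 V))).Walk u v'),
      u ∈ Rside G (Z m) S → u ∈ Rside G (Z (m + 1)) S → v' ∈ Rside G (Z (m + 1)) S := by
    intro u v' W'
    induction W' with
    | nil => intro _ h2; exact h2
    | @cons a b c h W' ih =>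
      intro ha ha'
      have hG : G.Adj a b := ((SimpleGraph.deleteEdges_adj).mp h).1
      have hZm : s(a, b) ∉ Z m := by
        have := ((SimpleGraph.deleteEdges_adj).mp h).2
        simpa using this
      have hb : b ∈ Rside G (Z m) S := Rside_adj ha hG hZm
      have hZm1 : s(a, b) ∉ Z (m + 1) := by
        intro hmem
        obtain ⟨x, y, hxy, _, hx, hy⟩ := Zedges hZ (by omega) (by omega) _ hmem
        have hm1 : m + 1 - 1 = m := rfl
        rw [hm1] at hx hy
        rcases Sym2.eq_iff.mp hxy with ⟨ha', _⟩ | ⟨ha', _⟩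
        · exact hx (ha' ▸ ha)
        · exact hy (ha' ▸ ha)
      have hb' : b ∈ Rside G (Z (m + 1)) S := Rside_adj ha' hG hZm1
      exact ih hb hb'
  exact key W (mem_Rside_self hs) (mem_Rside_self hs)

lemma Rside_mono (hZ : IsDrainage G S T p k Z) {m m' : ℕ}
    (h1 : 1 ≤ m) (hmm : m ≤ m') (hk : m' ≤ k) :
    Rside G (Z m) S ⊆ Rside G (Z m') S := by
  induction m' with
  | zero => omega
  | succ n ih =>
    rcases Nat.lt_or_ge m (n + 1) with hlt | hge
    · exact (ih (by omega) (by omega)).trans (Rside_mono_step hZ (by omega) (by omega))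
    · have : m = n + 1 := by omega
      subst this
      exact le_refl _

end Drainage


/-! ### Crossing structure of Menger paths -/

section Crossing

variable {G : SimpleGraph V} {S T : Set V} {p k : ℕ} {Z : ℕ → Finset (Sym2 V)}

/-- Each Menger path meets each drainage cut in exactly one edge, and every
edge of the cut lies on some path. -/
lemma crossing (hZ : IsDrainage G S T p k Z) (M : MengerFamily G S T p)
    {m : ℕ} (h1 : 1 ≤ m) (hk : m ≤ k) :
    (∀ e ∈ Z m, ∃ j, e ∈ (M.walk j).edges) ∧
    (∀ j : Fin p, ∀ e ∈ (M.walk j).edges, ∀ e' ∈ (M.walk j).edges,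
      e ∈ Z m → e' ∈ Z m → e = e') ∧
    (∀ j : Fin p, ∃ e ∈ Z m, e ∈ (M.walk j).edges) := by
  classical
  have hcut : EdgeCut G S T (Z m) := edgeCutZ hZ m h1 hk
  have hcard : (Z m).card = p := cardZ hZ h1 hk
  set Ej : Fin p → Finset (Sym2 V) :=
    fun j => (Z m).filter (fun e => e ∈ (M.walk j).edges) with hEj
  have hne : ∀ j, ∃ e ∈ Z m, e ∈ (M.walk j).edges := by
    intro j
    by_contra hcon
    push_neg at hcon
    have hW := (M.walk j).toDeleteEdges ((Z m : Finset (Sym2 V)) : Set (Sym2 V))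
      (fun e he => by simpa using fun hm => hcon e hm he)
    exact hcut _ (M.ha j) _ (M.hb j) hW.reachable
  have hne' : ∀ j, (Ej j).Nonempty := by
    intro j
    obtain ⟨e, he1, he2⟩ := hne j
    exact ⟨e, by simp [hEj, he1, he2]⟩
  have hdisj : ∀ x ∈ (Finset.univ : Finset (Fin p)), ∀ y ∈ Finset.univ, x ≠ y →
      Disjoint (Ej x) (Ej y) := by
    intro x _ y _ hxy
    rw [Finset.disjoint_left]
    intro e hex hey
    simp only [hEj, Finset.mem_filter] at hex hey
    exact M.edgeDisj x y hxy e hex.2 hey.2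
  have hsub : (Finset.univ.biUnion Ej) ⊆ Z m := by
    intro e he
    obtain ⟨j, _, hej⟩ := Finset.mem_biUnion.mp he
    exact (Finset.mem_filter.mp hej).1
  have hcard1 : ∑ j : Fin p, (Ej j).card = (Finset.univ.biUnion Ej).card :=
    (Finset.card_biUnion hdisj).symm
  have hup : (Finset.univ.biUnion Ej).card ≤ p := by
    calc (Finset.univ.biUnion Ej).card ≤ (Z m).card := Finset.card_le_card hsub
    _ = p := hcard
  have hlow : (p : ℕ) ≤ ∑ j : Fin p, (Ej j).card := by
    calc (p : ℕ) = ∑ _j : Fin p, 1 := by simp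
    _ ≤ ∑ j : Fin p, (Ej j).card := Finset.sum_le_sum
        (fun j _ => Finset.card_pos.mpr (hne' j))
  have hsum : ∑ j : Fin p, (Ej j).card = p := le_antisymm (hcard1 ▸ hup) hlow
  have hone : ∀ j : Fin p, (Ej j).card = 1 := by
    intro j0
    by_contra hcon
    have h2 : 2 ≤ (Ej j0).card := by
      have := Finset.card_pos.mpr (hne' j0)
      omega
    have : (p : ℕ) < ∑ j : Fin p, (Ej j).card := by
      calc (p : ℕ) = ∑ _j : Fin p, 1 := by simp
      _ < ∑ j : Fin p, (Ej j).card :=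
        Finset.sum_lt_sum (fun j _ => Finset.card_pos.mpr (hne' j))
          ⟨j0, Finset.mem_univ _, by omega⟩
    omega
  have hbieq : Finset.univ.biUnion Ej = Z m := by
    apply Finset.eq_of_subset_of_card_le hsub
    rw [hcard, ← hcard1, hsum]
  refine ⟨?_, ?_, hne⟩
  · intro e he
    rw [← hbieq] at he
    obtain ⟨j, _, hej⟩ := Finset.mem_biUnion.mp he
    exact ⟨j, (Finset.mem_filter.mp hej).2⟩
  · intro j e he e' he' heZ heZ'
    have h1' : e ∈ Ej j := by simp [hEj, heZ, he]
    have h2' : e' ∈ Ej j := by simp [hEj, heZ', he']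
    obtain ⟨x, hx⟩ := Finset.card_eq_one.mp (hone j)
    rw [hx] at h1' h2'
    rw [Finset.mem_singleton.mp h1', Finset.mem_singleton.mp h2']

/-- Orientation: the unique crossing dart of path `j` through `Z m` goes from
inside `R(Z m)` to outside. -/
lemma orientation (hZ : IsDrainage G S T p k Z) (M : MengerFamily G S T p)
    {m : ℕ} (h1 : 1 ≤ m) (hk : m ≤ k) {j : Fin p} {d : G.Dart}
    (hd : d ∈ (M.walk j).darts) (hdZ : d.edge ∈ Z m) :
    d.fst ∈ Rside G (Z m) S ∧ d.snd ∉ Rside G (Z m) S := by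
  obtain ⟨W1, W2, hsplit⟩ := walk_split_dart _ hd
  have hedges : (M.walk j).edges = W1.edges ++ d.edge :: W2.edges := by
    rw [walk_edges_eq_darts_map, hsplit]
    simp [walk_edges_eq_darts_map]
  have hnodup := (M.isPath j).isTrail.edges_nodup
  rw [hedges] at hnodup
  have hdisj := List.disjoint_of_nodup_append hnodup
  have huniq := (crossing hZ M h1 hk).2.1 j
  have hW1 : ∀ e ∈ W1.edges, e ∉ Z m := by
    intro e he hmem
    have heW : e ∈ (M.walk j).edges := by rw [hedges]; exact List.mem_append_left _ he
    have hdW : d.edge ∈ (M.walk j).edges := by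
      rw [hedges]; exact List.mem_append_right _ (List.mem_cons_self)
    have : e = d.edge := huniq e heW d.edge hdW hmem hdZ
    exact hdisj (this ▸ he) (List.mem_cons_self)
  have hW2 : ∀ e ∈ W2.edges, e ∉ Z m := by
    intro e he hmem
    have heW : e ∈ (M.walk j).edges := by
      rw [hedges]; exact List.mem_append_right _ (List.mem_cons_of_mem _ he)
    have hdW : d.edge ∈ (M.walk j).edges := by
      rw [hedges]; exact List.mem_append_right _ (List.mem_cons_self)
    have heq : e = d.edge := huniq e heW d.edge hdW hmem hdZ
    have : (d.edge :: W2.edges).Nodup := (List.nodup_append.mp hnodup).2.1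
    exact (List.nodup_cons.mp this).1 (heq ▸ he)
  have hfst : d.fst ∈ Rside G (Z m) S := mem_Rside_of_walk (M.ha j) W1 hW1
  have hsnd : d.snd ∉ Rside G (Z m) S := by
    intro hin
    have hb : (M.b j) ∈ Rside G (Z m) S :=
      Rside_reach hin (W2.toDeleteEdges _ (fun e he => by simpa using hW2 e he)).reachable
    obtain ⟨s0, hs0, hr⟩ := hb
    exact edgeCutZ hZ m h1 hk s0 hs0 _ (M.hb j) hr
  exact ⟨hfst, hsnd⟩

/-- Endpoints of edges of `Z m` (`m ≥ 2`) are outside `R(Z (m-1))`. -/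
lemma endpoint_not_R (hZ : IsDrainage G S T p k Z) {m : ℕ} (h2 : 2 ≤ m) (hk : m ≤ k)
    {e : Sym2 V} (he : e ∈ Z m) {x y : V} (hxy : s(x, y) = e) :
    x ∉ Rside G (Z (m - 1)) S ∧ y ∉ Rside G (Z (m - 1)) S := by
  obtain ⟨u, v, huv, _, hu, hv⟩ := Zedges hZ h2 hk e he
  rcases Sym2.eq_iff.mp (hxy.trans huv) with ⟨hx, hy⟩ | ⟨hx, hy⟩
  · exact ⟨hx ▸ hu, hy ▸ hv⟩
  · exact ⟨hx ▸ hv, hy ▸ hu⟩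

/-- Distinct drainage cuts are edge-disjoint. -/
lemma levelDisjoint (hZ : IsDrainage G S T p k Z) (M : MengerFamily G S T p)
    {g m : ℕ} (h1 : 1 ≤ g) (hgm : g < m) (hk : m ≤ k) :
    ∀ e ∈ Z g, e ∉ Z m := by
  intro e heg hem
  obtain ⟨j, hj⟩ := (crossing hZ M h1 (le_trans (le_of_lt hgm) hk)).1 e heg
  obtain ⟨d, hd, hde⟩ := exists_dart_of_edge hj
  have hfst := (orientation hZ M h1 (le_trans (le_of_lt hgm) hk) hd (hde ▸ heg)).1
  have hfst' : d.fst ∈ Rside G (Z (m - 1)) S :=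
    Rside_mono hZ h1 (by omega) (by omega) hfst
  have := (endpoint_not_R hZ (by omega) hk hem ((dart_edge_eq d).symm.trans hde)).1
  exact this hfst'

end Crossing


/-! ### Wet/dry area machinery -/

section WetDry

variable {G : SimpleGraph V} {S T : Set V} {p k : ℕ} {Z : ℕ → Finset (Sym2 V)}

/-- A walk whose darts all belong to Menger path `j` and which starts outside
`R(Z m)` stays outside it and avoids `Z m` entirely. -/
lemma noReturn (hZ : IsDrainage G S T p k Z) (M : MengerFamily G S T p)
    {m : ℕ} (h1 : 1 ≤ m) (hk : m ≤ k) {j : Fin p} :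
    ∀ {x y : V} (W : G.Walk x y), (∀ d ∈ W.darts, d ∈ (M.walk j).darts) →
      x ∉ Rside G (Z m) S →
      (∀ v ∈ W.support, v ∉ Rside G (Z m) S) ∧ (∀ e ∈ W.edges, e ∉ Z m) := by
  intro x y W
  induction W with
  | nil =>
    intro _ hx
    refine ⟨?_, by simp⟩
    intro v hv
    rw [SimpleGraph.Walk.support_nil, List.mem_singleton] at hv
    exact hv ▸ hx
  | @cons a b c h W ih =>
    intro hdarts hx
    have hd0 : (⟨(a, b), h⟩ : G.Dart) ∈ (M.walk j).darts :=
      hdarts _ (by rw [SimpleGraph.Walk.darts_cons]; exact List.mem_cons_self)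
    have hedge : s(a, b) ∉ Z m := by
      intro hmem
      exact hx (orientation hZ M h1 hk hd0 hmem).1
    have hb : b ∉ Rside G (Z m) S := by
      intro hbR
      exact hx (Rside_adj hbR h.symm (by rwa [Sym2.eq_swap]))
    have IH := ih (fun d hd => hdarts d
      (by rw [SimpleGraph.Walk.darts_cons]; exact List.mem_cons_of_mem _ hd)) hb
    constructor
    · intro v hv
      rw [SimpleGraph.Walk.support_cons, List.mem_cons] at hv
      rcases hv with rfl | hv
      · exact hx
      · exact IH.1 v hv
    · intro e he
      rw [SimpleGraph.Walk.edges_cons, List.mem_cons] at he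
      rcases he with rfl | he
      · exact hedge
      · exact IH.2 e he

/-- Wetness propagates along a walk whose darts lie on Menger paths and whose
edges avoid the dam `B`. -/
lemma wetWalk (M : MengerFamily G S T p) (B : Finset (Sym2 V)) :
    ∀ {x y : V} (W : G.Walk x y), (∀ d ∈ W.darts, ∃ j, d ∈ (M.walk j).darts) →
      (∀ e ∈ W.edges, e ∉ B) →
      (∃ s ∈ S, Relation.ReflTransGen (M.step B) s x) →
      ∀ v ∈ W.support, ∃ s ∈ S, Relation.ReflTransGen (M.step B) s v := by
  intro x y W
  induction W with
  | nil =>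
    intro _ _ hx v hv
    rw [SimpleGraph.Walk.support_nil, List.mem_singleton] at hv
    exact hv ▸ hx
  | @cons a b c h W ih =>
    intro hdarts hedges hx v hv
    obtain ⟨j, hdj⟩ := hdarts _ (by rw [SimpleGraph.Walk.darts_cons]; exact List.mem_cons_self)
    have harc : M.Arc a b := ⟨j, ⟨(a, b), h⟩, hdj, rfl⟩
    have hstep : M.step B a b :=
      ⟨Or.inl harc, hedges _ (by rw [SimpleGraph.Walk.edges_cons]; exact List.mem_cons_self)⟩
    have hb : ∃ s ∈ S, Relation.ReflTransGen (M.step B) s b := by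
      obtain ⟨s0, hs0, hr⟩ := hx
      exact ⟨s0, hs0, hr.tail hstep⟩
    rw [SimpleGraph.Walk.support_cons, List.mem_cons] at hv
    rcases hv with rfl | hv
    · exact hx
    · exact ih (fun d hd => hdarts d
        (by rw [SimpleGraph.Walk.darts_cons]; exact List.mem_cons_of_mem _ hd))
        (fun e he => hedges e
        (by rw [SimpleGraph.Walk.edges_cons]; exact List.mem_cons_of_mem _ he)) hb v hv

/-- If the edge of a dart on a Menger path belongs to `E*(B')` but not to `B'`,
then the tail of the dart is dry. -/
lemma dry_fst_of_mem_Estar (M : MengerFamily G S T p) {B' : Finset (Sym2 V)}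
    {j : Fin p} {d : G.Dart} (hd : d ∈ (M.walk j).darts)
    (hE : d.edge ∈ M.Estar B') (hB' : d.edge ∉ B') :
    d.fst ∈ M.dryArea B' := by
  by_contra hwet
  have hfw : ∃ s ∈ S, Relation.ReflTransGen (M.step B') s d.fst := by
    have : ¬ d.fst ∈ M.dryArea B' := hwet
    rw [MengerFamily.dryArea, Set.mem_setOf_eq, not_not] at this
    exact this
  have harc : M.Arc d.fst d.snd := ⟨j, d, hd, rfl⟩
  have hstep : M.step B' d.fst d.snd := ⟨Or.inl harc, by
    rw [← dart_edge_eq]; exact hB'⟩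
  have hsw : ∃ s ∈ S, Relation.ReflTransGen (M.step B') s d.snd := by
    obtain ⟨s0, hs0, hr⟩ := hfw
    exact ⟨s0, hs0, hr.tail hstep⟩
  obtain ⟨u, v, huv, _, hu, _⟩ := hE
  have : u = d.fst ∨ u = d.snd := by
    have : s(u, v) = s(d.fst, d.snd) := huv.symm.trans (dart_edge_eq d)
    rcases Sym2.eq_iff.mp this with ⟨h1', _⟩ | ⟨h1', _⟩
    · exact Or.inl h1'
    · exact Or.inr h1'
  rcases this with rfl | rfl
  · exact hu hfw
  · exact hu hsw

/-- Monotonicity of wetness: if `B_h = E*(B_g) ∩ Z h`, then any vertex wet with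
respect to `B_g` is wet with respect to `B_h`. -/
lemma wet_mono (M : MengerFamily G S T p) {Bg Bh : Finset (Sym2 V)}
    (hBhE : ∀ e ∈ Bh, e ∈ M.Estar Bg) :
    ∀ {s0 v : V}, s0 ∈ S → Relation.ReflTransGen (M.step Bg) s0 v →
      Relation.ReflTransGen (M.step Bh) s0 v := by
  intro s0 v hs0 hr
  induction hr with
  | refl => exact Relation.ReflTransGen.refl
  | @tail b c hab hbc ih =>
    by_cases hc : s(b, c) ∈ Bh
    · exfalso
      have hE := hBhE _ hc
      have hbw : ∃ s ∈ S, Relation.ReflTransGen (M.step Bg) s b := ⟨s0, hs0, hab⟩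
      have hcw : ∃ s ∈ S, Relation.ReflTransGen (M.step Bg) s c :=
        ⟨s0, hs0, hab.tail hbc⟩
      obtain ⟨u, v', huv, _, hu, _⟩ := hE
      rcases Sym2.eq_iff.mp huv.symm with ⟨h1', _⟩ | ⟨h1', _⟩
      · exact hu (h1' ▸ hbw)
      · exact hu (h1' ▸ hcw)
    · exact ih.tail ⟨hbc.1, hc⟩

end WetDry

/-! ### Signatures determine dams -/

section Sig

variable {G : SimpleGraph V} {S T : Set V} {p k : ℕ} {Z : ℕ → Finset (Sym2 V)}

lemma not_in_sig_path_avoids {M : MengerFamily G S T p} {B1 : Finset (Sym2 V)}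
    {j : Fin p} (hj : j ∉ M.sig B1) : ∀ e ∈ (M.walk j).edges, e ∉ B1 :=
  fun e he hB => hj ⟨e, hB, he⟩

/-- Two subsets of the same drainage cut with the same signature are equal. -/
lemma dam_eq_of_sig_eq (hZ : IsDrainage G S T p k Z) (M : MengerFamily G S T p)
    {m : ℕ} (h1 : 1 ≤ m) (hk : m ≤ k) {B1 B2 : Finset (Sym2 V)}
    (h1Z : B1 ⊆ Z m) (h2Z : B2 ⊆ Z m) (hs : M.sig B1 = M.sig B2) : B1 = B2 := by
  have key : ∀ (A A' : Finset (Sym2 V)), A ⊆ Z m → A' ⊆ Z m →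
      M.sig A = M.sig A' → ∀ e ∈ A, e ∈ A' := by
    intro A A' hA hA' hAs e he
    obtain ⟨j, hj⟩ := (crossing hZ M h1 hk).1 e (hA he)
    have hjsig : j ∈ M.sig A := ⟨e, he, hj⟩
    rw [hAs] at hjsig
    obtain ⟨e', he', hje'⟩ := hjsig
    have : e' = e := (crossing hZ M h1 hk).2.1 j e' hje' e hj (hA' he') (hA he)
    exact this ▸ he'
  exact Finset.Subset.antisymm (fun e he => key B1 B2 h1Z h2Z hs e he)
    (fun e he => key B2 B1 h2Z h1Z hs.symm e he)

/-- Each path in the signature of a dam `B ⊆ Z m` selects its unique `Z m`-edge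
inside `B`. -/
lemma sig_edge (hZ : IsDrainage G S T p k Z) (M : MengerFamily G S T p)
    {m : ℕ} (h1 : 1 ≤ m) (hk : m ≤ k) {B : Finset (Sym2 V)} (hBZ : B ⊆ Z m)
    {j : Fin p} (hj : j ∈ M.sig B) :
    ∃ e ∈ B, e ∈ (M.walk j).edges ∧
      ∀ e' ∈ Z m, e' ∈ (M.walk j).edges → e' = e := by
  obtain ⟨e, he, hje⟩ := hj
  exact ⟨e, he, hje, fun e' he'Z he'j =>
    (crossing hZ M h1 hk).2.1 j e' he'j e hje he'Z (hBZ he)⟩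

end Sig


/-! ### Core lemmas: transitivity and interpolation of `Closer` -/

section Core

variable {G : SimpleGraph V} {S T : Set V} {p k : ℕ} {Z : ℕ → Finset (Sym2 V)}

/-- If an edge of `Z m` lies in `E*(B1)` then its Menger path meets `B1`. -/
lemma mem_sig_of_estar (M : MengerFamily G S T p) {B1 : Finset (Sym2 V)}
    {e : Sym2 V} (hE : e ∈ M.Estar B1) {j : Fin p} (hj : e ∈ (M.walk j).edges) :
    j ∈ M.sig B1 := by
  by_contra hcon
  have havoid : ∀ e' ∈ (M.walk j).edges, e' ∉ B1 := not_in_sig_path_avoids hcon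
  have hwet := wetWalk M B1 (M.walk j) (fun d hd => ⟨j, hd⟩) havoid
    ⟨M.a j, M.ha j, Relation.ReflTransGen.refl⟩
  obtain ⟨d, hd, hde⟩ := exists_dart_of_edge hj
  have hfst := hwet d.fst (SimpleGraph.Walk.dart_fst_mem_support_of_mem_darts _ hd)
  have hsnd := hwet d.snd (SimpleGraph.Walk.dart_snd_mem_support_of_mem_darts _ hd)
  obtain ⟨u, v, huv, _, hu, _⟩ := hE
  have : s(u, v) = s(d.fst, d.snd) := huv.symm.trans (hde ▸ dart_edge_eq d)
  rcases Sym2.eq_iff.mp this with ⟨h1', _⟩ | ⟨h1', _⟩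
  · exact hu (h1' ▸ hfst)
  · exact hu (h1' ▸ hsnd)

/-- Transitivity of the `Closer` relation on dams. -/
lemma closer_trans (hZ : IsDrainage G S T p k Z) (M : MengerFamily G S T p)
    {g h i : ℕ} {Bg Bh Bi : Finset (Sym2 V)}
    (_hdg : IsDam Z k g Bg) (hdh : IsDam Z k h Bh) (hdi : IsDam Z k i Bi)
    (c1 : Closer M Z g h Bg Bh) (c2 : Closer M Z h i Bh Bi) :
    Closer M Z g i Bg Bi := by
  obtain ⟨hgh, hs1, hE1⟩ := c1
  obtain ⟨hhi, hs2, hE2⟩ := c2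
  have hi1 : 1 ≤ i := hdi.1
  have hik : i ≤ k := hdi.2.1
  have hBhE : ∀ e ∈ Bh, e ∈ M.Estar Bg := by
    intro e he
    have : e ∈ M.Estar Bg ∩ ((Z h : Finset (Sym2 V)) : Set (Sym2 V)) := by
      rw [hE1]; exact he
    exact this.1
  refine ⟨hgh.trans hhi, hs1.trans hs2, ?_⟩
  apply Set.Subset.antisymm
  · rintro e ⟨heE, heZ⟩
    rw [Finset.mem_coe] at heZ ⊢
    obtain ⟨j, hj⟩ := (crossing hZ M hi1 hik).1 e heZ
    have hjsig : j ∈ M.sig Bg := mem_sig_of_estar M heE hj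
    rw [hs1, hs2] at hjsig
    obtain ⟨e', he'B, he'j, huniq⟩ := sig_edge hZ M hi1 hik hdi.2.2.1 hjsig
    have : e = e' := huniq e heZ hj
    exact this ▸ he'B
  · intro e heB
    rw [Finset.mem_coe] at heB
    have heZ : e ∈ Z i := hdi.2.2.1 heB
    refine ⟨?_, heZ⟩
    obtain ⟨j, hj⟩ := (crossing hZ M hi1 hik).1 e heZ
    obtain ⟨d, hd, hde⟩ := exists_dart_of_edge hj
    have hEh : e ∈ M.Estar Bh := by
      have : e ∈ M.Estar Bh ∩ ((Z i : Finset (Sym2 V)) : Set (Sym2 V)) := by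
        rw [hE2]; exact heB
      exact this.1
    have heBh : e ∉ Bh := fun hmem =>
      levelDisjoint hZ M hdh.1 hhi hik e (hdh.2.2.1 hmem) heZ
    have hdryh : d.fst ∈ M.dryArea Bh :=
      dry_fst_of_mem_Estar M hd (hde.symm ▸ hEh) (hde.symm ▸ heBh)
    have hdryg : d.fst ∈ M.dryArea Bg := by
      rintro ⟨s0, hs0, hr⟩
      exact hdryh ⟨s0, hs0, wet_mono M hBhE hs0 hr⟩
    refine ⟨d.fst, d.snd, (hde.symm.trans (dart_edge_eq d)), d.adj, hdryg, ?_⟩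
    by_cases hsnd : d.snd ∈ M.dryArea Bg
    · exact Or.inl (Or.inr hsnd)
    · exact Or.inr ⟨hsnd, d.fst, Or.inr hdryg, d.adj⟩

/-- Key drying lemma: if `B1` (level `h1`) is closer than `Bi` (level `i`), and
`h1 < h2 < i`, then the tail of the `Z h2`-crossing of any path in the signature
is dry with respect to `B1`. -/
lemma dry_mid (hZ : IsDrainage G S T p k Z) (M : MengerFamily G S T p)
    {h1 h2 i : ℕ} {B1 Bi : Finset (Sym2 V)}
    (hd1 : IsDam Z k h1 B1) (hdi : IsDam Z k i Bi)
    (hlt12 : h1 < h2) (hlt2i : h2 < i)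
    (c1 : Closer M Z h1 i B1 Bi) {j : Fin p} (hj : j ∈ M.sig Bi)
    {d2 : G.Dart} (hd2 : d2 ∈ (M.walk j).darts) (hd2Z : d2.edge ∈ Z h2) :
    d2.fst ∈ M.dryArea B1 := by
  obtain ⟨_, hsig1, hE1⟩ := c1
  have hi1 : 1 ≤ i := hdi.1
  have hik : i ≤ k := hdi.2.1
  have h2k : h2 ≤ k := le_trans (le_of_lt hlt2i) hik
  have h11 : 1 ≤ h1 := hd1.1
  rintro ⟨s0, hs0, hr⟩
  -- the crossing dart of path j through Z i
  obtain ⟨ei, heiB, heij, huniqi⟩ := sig_edge hZ M hi1 hik hdi.2.2.1 hj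
  obtain ⟨di, hdi', hdie⟩ := exists_dart_of_edge heij
  -- d2 ≠ di since their edges are in disjoint cuts
  have hedisj : d2.edge ≠ di.edge := by
    intro heq
    exact levelDisjoint hZ M (by omega) hlt2i hik d2.edge hd2Z
      (by rw [heq, hdie]; exact hdi.2.2.1 heiB)
  -- split the walk at di
  obtain ⟨V1, V2, hsplit⟩ := walk_split_dart (M.walk j) hdi'
  have hV1sub : ∀ d ∈ V1.darts, d ∈ (M.walk j).darts := by
    intro d hd; rw [hsplit]; exact List.mem_append_left _ hd
  have hV2sub : ∀ d ∈ V2.darts, d ∈ (M.walk j).darts := by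
    intro d hd; rw [hsplit]
    exact List.mem_append_right _ (List.mem_cons_of_mem _ hd)
  -- d2 lies in V1
  have hd2V1 : d2 ∈ V1.darts := by
    have hmem : d2 ∈ V1.darts ++ di :: V2.darts := hsplit ▸ hd2
    rcases List.mem_append.mp hmem with hm | hm
    · exact hm
    · rcases List.mem_cons.mp hm with rfl | hm
      · exact absurd rfl hedisj
      · exfalso
        -- di.snd is an endpoint of a Z i edge, hence outside R (Z (i-1)) ⊇ R (Z h2)
        have hsndR : di.snd ∉ Rside G (Z h2) S := by
          have hnot := (endpoint_not_R hZ (by omega) hik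
            (by rw [hdie]; exact hdi.2.2.1 heiB)
            ((dart_edge_eq di).symm : s(di.fst, di.snd) = di.edge)).2
          intro hmem2
          exact hnot (Rside_mono hZ (by omega) (by omega) (by omega) hmem2)
        have hNR := noReturn hZ M (by omega : 1 ≤ h2) h2k V2 hV2sub hsndR
        have : d2.fst ∈ V2.support :=
          SimpleGraph.Walk.dart_fst_mem_support_of_mem_darts _ hm
        exact hNR.1 _ this (orientation hZ M (by omega) h2k hd2 hd2Z).1
  -- split V1 at d2: the tail piece U2 goes from d2.snd to di.fst
  obtain ⟨U1, U2, hsplit2⟩ := walk_split_dart V1 hd2V1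
  have hU2sub : ∀ d ∈ U2.darts, d ∈ (M.walk j).darts := by
    intro d hd
    apply hV1sub
    rw [hsplit2]
    exact List.mem_append_right _ (List.mem_cons_of_mem _ hd)
  -- d2.snd is outside R (Z h1)
  have hsndR1 : d2.snd ∉ Rside G (Z h1) S := by
    have hnot := (endpoint_not_R hZ (by omega) h2k hd2Z
      ((dart_edge_eq d2).symm : s(d2.fst, d2.snd) = d2.edge)).2
    intro hmem2
    exact hnot (Rside_mono hZ h11 (by omega) (by omega) hmem2)
  have hNR1 := noReturn hZ M h11 (by omega : h1 ≤ k) U2 hU2sub hsndR1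
  -- edges of U2 avoid B1
  have hU2B1 : ∀ e ∈ U2.edges, e ∉ B1 := fun e he hmem =>
    hNR1.2 e he (hd1.2.2.1 hmem)
  -- propagate wetness: d2.snd is wet w.r.t. B1
  have harc2 : M.step B1 d2.fst d2.snd := by
    refine ⟨Or.inl ⟨j, d2, hd2, rfl⟩, ?_⟩
    rw [← dart_edge_eq]
    intro hmem
    exact levelDisjoint hZ M h11 hlt12 h2k d2.edge (hd1.2.2.1 hmem) hd2Z
  have hsndwet : ∃ s ∈ S, Relation.ReflTransGen (M.step B1) s d2.snd :=
    ⟨s0, hs0, hr.tail harc2⟩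
  -- propagate along U2 to di.fst
  have hwetU2 := wetWalk M B1 U2 (fun d hd => ⟨j, hU2sub d hd⟩) hU2B1 hsndwet
  have hfstwet : ∃ s ∈ S, Relation.ReflTransGen (M.step B1) s di.fst :=
    hwetU2 di.fst (SimpleGraph.Walk.end_mem_support U2)
  -- cross di: di.snd is wet w.r.t. B1
  have harci : M.step B1 di.fst di.snd := by
    refine ⟨Or.inl ⟨j, di, hdi', rfl⟩, ?_⟩
    rw [← dart_edge_eq]
    intro hmem
    exact levelDisjoint hZ M h11 (by omega) hik di.edge (hd1.2.2.1 hmem)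
      (by rw [hdie]; exact hdi.2.2.1 heiB)
  have hsndwet' : ∃ s ∈ S, Relation.ReflTransGen (M.step B1) s di.snd := by
    obtain ⟨s1, hs1, hr1⟩ := hfstwet
    exact ⟨s1, hs1, hr1.tail harci⟩
  -- but ei ∈ E*(B1), so one endpoint of di is dry: contradiction
  have hEi : ei ∈ M.Estar B1 := by
    have : ei ∈ M.Estar B1 ∩ ((Z i : Finset (Sym2 V)) : Set (Sym2 V)) := by
      rw [hE1]; exact heiB
    exact this.1
  obtain ⟨u, v, huv, _, hu, _⟩ := hEi
  have : s(u, v) = s(di.fst, di.snd) := huv.symm.trans (hdie ▸ dart_edge_eq di)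
  rcases Sym2.eq_iff.mp this with ⟨h1', _⟩ | ⟨h1', _⟩
  · exact hu (h1' ▸ hfstwet)
  · exact hu (h1' ▸ hsndwet')

/-- Interpolation: two dams closer than the same dam at different levels are
themselves related by `Closer`. -/
lemma closer_interp (hZ : IsDrainage G S T p k Z) (M : MengerFamily G S T p)
    {h1 h2 i : ℕ} {B1 B2 Bi : Finset (Sym2 V)}
    (hd1 : IsDam Z k h1 B1) (hd2 : IsDam Z k h2 B2) (hdi : IsDam Z k i Bi)
    (hlt : h1 < h2)
    (c1 : Closer M Z h1 i B1 Bi) (c2 : Closer M Z h2 i B2 Bi) :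
    Closer M Z h1 h2 B1 B2 := by
  have hi1 : 1 ≤ i := hdi.1
  have hik : i ≤ k := hdi.2.1
  have h2k : h2 ≤ k := le_trans (le_of_lt c2.1) hik
  have h21 : 1 ≤ h2 := hd2.1
  refine ⟨hlt, c1.2.1.trans c2.2.1.symm, ?_⟩
  apply Set.Subset.antisymm
  · rintro e ⟨heE, heZ⟩
    rw [Finset.mem_coe] at heZ ⊢
    obtain ⟨j, hj⟩ := (crossing hZ M h21 h2k).1 e heZ
    have hjsig : j ∈ M.sig B1 := mem_sig_of_estar M heE hj
    rw [c1.2.1, ← c2.2.1] at hjsig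
    obtain ⟨e', he'B, he'j, huniq⟩ := sig_edge hZ M h21 h2k hd2.2.2.1 hjsig
    have : e = e' := huniq e heZ hj
    exact this ▸ he'B
  · intro e heB
    rw [Finset.mem_coe] at heB
    have heZ : e ∈ Z h2 := hd2.2.2.1 heB
    refine ⟨?_, heZ⟩
    obtain ⟨j, hj⟩ := (crossing hZ M h21 h2k).1 e heZ
    obtain ⟨d, hd, hde⟩ := exists_dart_of_edge hj
    have hjsig2 : j ∈ M.sig B2 := ⟨e, heB, hj⟩
    have hjsigi : j ∈ M.sig Bi := by rw [← c2.2.1]; exact hjsig2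
    have hdry1 : d.fst ∈ M.dryArea B1 :=
      dry_mid hZ M hd1 hdi hlt c2.1 c1 hjsigi hd (hde.symm ▸ heZ)
    refine ⟨d.fst, d.snd, (hde.symm.trans (dart_edge_eq d)), d.adj, hdry1, ?_⟩
    by_cases hsnd : d.snd ∈ M.dryArea B1
    · exact Or.inl (Or.inr hsnd)
    · exact Or.inr ⟨hsnd, d.fst, Or.inr hdry1, d.adj⟩

end Core

end CDAux

/-- Every dam has a unique closest dam: either the dam itself is a
closest dam, or there is exactly one closest dam closer than it. -/
theorem unique_closest_dam
    [Fintype V] (G : SimpleGraph V) (S T : Set V)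
    (hST : Disjoint S T) (hS : S.Nonempty) (hT : T.Nonempty)
    (p k : ℕ) (Z : ℕ → Finset (Sym2 V))
    (hmin : ∃ X0 : Finset (Sym2 V), MinEdgeCut G S T X0 ∧ X0.card = p)
    (hZ : IsDrainage G S T p k Z) (M : MengerFamily G S T p)
    (i : ℕ) (B : Finset (Sym2 V)) (hB : IsDam Z k i B) :
    ∃! q : ℕ × Finset (Sym2 V),
      ClosestDam M Z k q.1 q.2 ∧ (q = (i, B) ∨ Closer M Z q.1 i q.2 B) := by
  classical
  by_cases hc : ∃ h Bh, IsDam Z k h Bh ∧ Closer M Z h i Bh B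
  · have hex : ∃ n : ℕ, ∃ Bh, IsDam Z k n Bh ∧ Closer M Z n i Bh B := hc
    obtain ⟨B0, hdam0, hcl0⟩ := Nat.find_spec hex
    have hmin0 : ∀ g, g < Nat.find hex → ¬ ∃ Bh, IsDam Z k g Bh ∧ Closer M Z g i Bh B :=
      fun g hg => Nat.find_min hex hg
    have hclosest : ClosestDam M Z k (Nat.find hex) B0 := by
      refine ⟨hdam0, ?_⟩
      rintro ⟨g, Bg, hdamg, hclg⟩
      exact hmin0 g hclg.1 ⟨Bg, hdamg, CDAux.closer_trans hZ M hdamg hdam0 hB hclg hcl0⟩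
    refine ⟨(Nat.find hex, B0), ⟨hclosest, Or.inr hcl0⟩, ?_⟩
    rintro ⟨h', B'⟩ ⟨⟨hdam', hn'⟩, hor⟩
    rcases hor with heq | hcl'
    · exfalso
      rw [Prod.mk.injEq] at heq
      obtain ⟨rfl, rfl⟩ := heq
      exact hn' hc
    · have hge : Nat.find hex ≤ h' :=
        le_of_not_gt fun hlt => hmin0 h' hlt ⟨B', hdam', hcl'⟩
      rcases eq_or_lt_of_le hge with heq | hlt
    -- same level: dams coincide
      · subst heq
        have hsig : M.sig B' = M.sig B0 := hcl'.2.1.trans hcl0.2.1.symm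
        have hBeq : B' = B0 := CDAux.dam_eq_of_sig_eq hZ M hdam'.1 hdam'.2.1
          hdam'.2.2.1 hdam0.2.2.1 hsig
        rw [hBeq]
      · exfalso
        exact hn' ⟨Nat.find hex, B0, hdam0,
          CDAux.closer_interp hZ M hdam0 hdam' hB hlt hcl0 hcl'⟩
  · refine ⟨(i, B), ⟨⟨hB, hc⟩, Or.inl rfl⟩, ?_⟩
    rintro ⟨h', B'⟩ ⟨⟨hdam', hn'⟩, hor⟩
    rcases hor with heq | hcl'
    · exact heq
    · exact absurd ⟨h', B', hdam', hcl'⟩ hc
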